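/- For every positive integer n, (1/n!) Σ_{σ ∈ S_n} #{A ∈ M(n,2) : σ·A^T = A} equals the number of partitions of n. -/

import Mathlib

open Matrix MulAction Equiv

namespace Stmt18

variable {n : ℕ}

/-- row and column sums all equal 2 -/
def RC (A : Matrix (Fin n) (Fin n) ℕ) : Prop :=
  (∀ i, ∑ j, A i j = 2) ∧ (∀ j, ∑ i, A i j = 2)

def X (n : ℕ) := {A : Matrix (Fin n) (Fin n) ℕ // RC A}

abbrev G (n : ℕ) := Equiv.Perm (Fin n) × Equiv.Perm (Fin n)

lemma entry_le {A : Matrix (Fin n) (Fin n) ℕ} (h : RC A) (i j : Fin n) : A i j ≤ 2 := by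
  calc A i j ≤ ∑ k, A i k := Finset.single_le_sum (fun k _ => Nat.zero_le _) (Finset.mem_univ j)
  _ = 2 := h.1 i

instance : Finite (X n) := by
  apply Finite.of_injective (fun A : X n => (fun i j => (⟨A.1 i j, by
    have := entry_le A.2 i j; omega⟩ : Fin 3) : Fin n → Fin n → Fin 3))
  intro A B hAB
  apply Subtype.ext
  funext i j
  have := congrFun (congrFun hAB i) j
  simpa [Fin.ext_iff] using this

def gsmul (g : G n) (A : X n) : X n :=
  ⟨fun i j => A.1 (g.1⁻¹ i) (g.2⁻¹ j), by
    obtain ⟨h1, h2⟩ := A.2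
    constructor
    · intro i
      rw [← h1 (g.1⁻¹ i)]
      exact Fintype.sum_equiv g.2⁻¹ _ _ (fun j => rfl)
    · intro j
      rw [← h2 (g.2⁻¹ j)]
      exact Fintype.sum_equiv g.1⁻¹ _ _ (fun i => rfl)⟩

instance : MulAction (G n) (X n) where
  smul := gsmul
  one_smul A := Subtype.ext rfl
  mul_smul g h A := by
    apply Subtype.ext
    funext i j
    show A.1 ((g.1 * h.1)⁻¹ i) ((g.2 * h.2)⁻¹ j) = A.1 (h.1⁻¹ (g.1⁻¹ i)) (h.2⁻¹ (g.2⁻¹ j))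
    simp [Equiv.Perm.mul_apply]

lemma smul_apply (g : G n) (A : X n) (i j : Fin n) :
    (g • A).1 i j = A.1 (g.1⁻¹ i) (g.2⁻¹ j) := rfl

/-- permutation matrix -/
def Pm (α : Equiv.Perm (Fin n)) : Matrix (Fin n) (Fin n) ℕ :=
  fun i j => if α i = j then 1 else 0

lemma Pm_row (α : Equiv.Perm (Fin n)) (i : Fin n) : ∑ j, Pm α i j = 1 := by
  simp [Pm]

lemma Pm_col (α : Equiv.Perm (Fin n)) (j : Fin n) : ∑ i, Pm α i j = 1 := by
  have : ∀ i, (if α i = j then (1:ℕ) else 0) = if i = α⁻¹ j then 1 else 0 := by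
    intro i; congr 1
    apply propext
    constructor
    · intro h; rw [← h]; simp
    · intro h; rw [h]; simp
  simp only [Pm, this]
  simp

lemma RC_PmPm (α β : Equiv.Perm (Fin n)) : RC (Pm α + Pm β) := by
  constructor
  · intro i
    rw [show (∑ j, (Pm α + Pm β) i j) = (∑ j, Pm α i j) + ∑ j, Pm β i j by
      rw [← Finset.sum_add_distrib]; rfl]
    rw [Pm_row, Pm_row]
  · intro j
    rw [show (∑ i, (Pm α + Pm β) i j) = (∑ i, Pm α i j) + ∑ i, Pm β i j by
      rw [← Finset.sum_add_distrib]; rfl]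
    rw [Pm_col, Pm_col]

/-- a ℕ-matrix with all row and column sums 1 is a permutation matrix -/
lemma perm_of_sums_one {B : Matrix (Fin n) (Fin n) ℕ}
    (hr : ∀ i, ∑ j, B i j = 1) (hc : ∀ j, ∑ i, B i j = 1) :
    ∃ β : Equiv.Perm (Fin n), B = Pm β := by
  classical
  have hex : ∀ i, ∃ j, B i j = 1 ∧ ∀ j', j' ≠ j → B i j' = 0 := by
    intro i
    have h1 := hr i
    have hne : ∃ j, B i j ≠ 0 := by
      by_contra hco
      push_neg at hco
      rw [Finset.sum_eq_zero (fun j _ => hco j)] at h1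
      omega
    obtain ⟨j, hj⟩ := hne
    have hsplit : ∑ k, B i k = B i j + ∑ k ∈ Finset.univ.erase j, B i k :=
      (Finset.add_sum_erase _ _ (Finset.mem_univ j)).symm
    rw [h1] at hsplit
    have hBj : B i j = 1 := by omega
    have hrest : ∑ k ∈ Finset.univ.erase j, B i k = 0 := by omega
    refine ⟨j, hBj, fun j' hj' => ?_⟩
    exact Finset.sum_eq_zero_iff.mp hrest j' (Finset.mem_erase.mpr ⟨hj', Finset.mem_univ _⟩)
  choose b hb1 hb2 using hex
  have hinj : Function.Injective b := by
    intro i i' hii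
    by_contra hne
    have hsplit : ∑ k, B k (b i) = B i (b i) + ∑ k ∈ Finset.univ.erase i, B k (b i) :=
      (Finset.add_sum_erase _ _ (Finset.mem_univ i)).symm
    have h2 : B i' (b i) = 1 := by rw [hii]; exact hb1 i'
    have h3 : B i' (b i) ≤ ∑ k ∈ Finset.univ.erase i, B k (b i) :=
      Finset.single_le_sum (f := fun k => B k (b i)) (fun k _ => Nat.zero_le _)
        (Finset.mem_erase.mpr ⟨fun hh => hne hh.symm, Finset.mem_univ _⟩)
    rw [hc (b i), hb1 i] at hsplit
    omega
  refine ⟨Equiv.ofBijective b (Finite.injective_iff_bijective.mp hinj), ?_⟩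
  funext i j
  show B i j = if b i = j then 1 else 0
  by_cases hj : b i = j
  · rw [if_pos hj, ← hj]; exact hb1 i
  · rw [if_neg hj]; exact hb2 i j (fun hh => hj hh.symm)

lemma exists_decomp' {A : Matrix (Fin n) (Fin n) ℕ} (hA : RC A) :
    ∃ α β : Equiv.Perm (Fin n), A = Pm α + Pm β := by
  classical
  set t : Fin n → Finset (Fin n) := fun i => Finset.univ.filter (fun j => A i j ≠ 0) with ht
  have hrowsum : ∀ i, ∑ j ∈ t i, A i j = 2 := by
    intro i
    rw [← hA.1 i]
    apply Finset.sum_subset (Finset.subset_univ _)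
    intro j _ hj
    simp only [ht, Finset.mem_filter, Finset.mem_univ, true_and, not_not] at hj
    exact hj
  have hall : ∀ s : Finset (Fin n), s.card ≤ (s.biUnion t).card := by
    intro s
    have h1 : 2 * s.card = ∑ i ∈ s, ∑ j ∈ t i, A i j := by
      rw [Finset.sum_congr rfl (fun i _ => hrowsum i)]
      simp [mul_comm]
    have h2 : ∑ i ∈ s, ∑ j ∈ t i, A i j ≤ ∑ i ∈ s, ∑ j ∈ s.biUnion t, A i j := by
      apply Finset.sum_le_sum
      intro i hi
      apply Finset.sum_le_sum_of_subset (Finset.subset_biUnion_of_mem t hi)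
    have h3 : ∑ i ∈ s, ∑ j ∈ s.biUnion t, A i j ≤ ∑ j ∈ s.biUnion t, (2:ℕ) := by
      rw [show ∑ i ∈ s, ∑ j ∈ s.biUnion t, A i j = ∑ j ∈ s.biUnion t, ∑ i ∈ s, A i j from
        Finset.sum_comm]
      apply Finset.sum_le_sum
      intro j _
      rw [← hA.2 j]
      apply Finset.sum_le_sum_of_subset (Finset.subset_univ s)
    have h4 : ∑ j ∈ s.biUnion t, (2:ℕ) = 2 * (s.biUnion t).card := by
      simp [mul_comm]
    omega
  obtain ⟨f, hfinj, hft⟩ := (Finset.all_card_le_biUnion_card_iff_exists_injective t).mp hall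
  set α := Equiv.ofBijective f (Finite.injective_iff_bijective.mp hfinj) with hα
  have hαpos : ∀ i, 1 ≤ A i (α i) := by
    intro i
    have := hft i
    simp only [ht, Finset.mem_filter] at this
    have : A i (f i) ≠ 0 := this.2
    show 1 ≤ A i (f i)
    omega
  set B : Matrix (Fin n) (Fin n) ℕ := fun i j => A i j - Pm α i j with hB
  have hPmle : ∀ i j, Pm α i j ≤ A i j := by
    intro i j
    by_cases hj : α i = j
    · rw [← hj]
      show Pm α i (α i) ≤ _
      simp only [Pm, if_pos rfl]
      exact hαpos i
    · simp [Pm, if_neg hj]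
  have hABP : A = Pm α + B := by
    funext i j
    show A i j = Pm α i j + B i j
    have := hPmle i j
    simp only [hB]
    omega
  have Pm_row : ∀ (γ : Equiv.Perm (Fin n)) i, ∑ j, Pm γ i j = 1 := by
    intro γ i; simp [Pm]
  have Pm_col : ∀ (γ : Equiv.Perm (Fin n)) j, ∑ i, Pm γ i j = 1 := by
    intro γ j
    have : ∀ i, Pm γ i j = if i = γ⁻¹ j then 1 else 0 := by
      intro i
      simp only [Pm]
      congr 1
      apply propext
      constructor
      · intro h; rw [← h]; simp
      · intro h; rw [h]; simp
    simp only [this]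
    simp
  have hBr : ∀ i, ∑ j, B i j = 1 := by
    intro i
    have h1 := hA.1 i
    rw [hABP] at h1
    have h2 : ∑ j, (Pm α i j + B i j) = 2 := h1
    rw [Finset.sum_add_distrib, Pm_row α i] at h2
    omega
  have hBc : ∀ j, ∑ i, B i j = 1 := by
    intro j
    have h1 := hA.2 j
    rw [hABP] at h1
    have h2 : ∑ i, (Pm α i j + B i j) = 2 := h1
    rw [Finset.sum_add_distrib, Pm_col α j] at h2
    omega
  obtain ⟨β, hβ⟩ := perm_of_sums_one hBr hBc
  exact ⟨α, β, by rw [hABP, hβ]⟩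

/-- every matrix in M(n,2) decomposes into two permutation matrices -/
lemma exists_decomp (A : X n) : ∃ α β : Equiv.Perm (Fin n), A.1 = Pm α + Pm β :=
  exists_decomp' A.2

/-- transformation of permutation matrices under the action -/
lemma smul_Pm (g : G n) (α β : Equiv.Perm (Fin n)) (A : X n)
    (h : A.1 = Pm α + Pm β) :
    (g • A).1 = Pm (g.2 * α * g.1⁻¹) + Pm (g.2 * β * g.1⁻¹) := by
  funext i j
  rw [smul_apply, h]
  show Pm α (g.1⁻¹ i) (g.2⁻¹ j) + Pm β (g.1⁻¹ i) (g.2⁻¹ j) = _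
  show _ = Pm (g.2 * α * g.1⁻¹) i j + Pm (g.2 * β * g.1⁻¹) i j
  have : ∀ γ : Equiv.Perm (Fin n), Pm γ (g.1⁻¹ i) (g.2⁻¹ j) = Pm (g.2 * γ * g.1⁻¹) i j := by
    intro γ
    simp only [Pm, Equiv.Perm.mul_apply]
    congr 1
    apply propext
    constructor
    · intro h; rw [h]; simp
    · intro h; rw [← h]; simp
  rw [this α, this β]

/-- key permutation lemma -/
lemma key_perm {u v θ : Equiv.Perm (Fin n)}
    (h : ∀ j, (u j = j ∧ v j = θ j) ∨ (u j = θ j ∧ v j = j)) :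
    IsConj θ (v * u⁻¹) := by
  classical
  set F : Fin n → Prop := fun j => u j = j ∧ v j = θ j with hF
  -- F is invariant under θ
  have hstep : ∀ j, F j → F (θ j) := by
    intro j hj
    by_cases h2 : F (θ j)
    · exact h2
    · rcases h (θ j) with h3 | h3
      · exact absurd h3 h2
      · -- v (θ j) = θ j and v j = θ j  ⇒ j = θ j
        have : j = θ j := v.injective (hj.2.trans h3.2.symm)
        rwa [← this]
  have hstep' : ∀ j, ¬ F j → ¬ F (θ j) := by
    intro j hj h2
    rcases h j with h3 | h3
    · exact hj h3
    · -- u j = θ j ; u (θ j) = θ j ⇒ j = θ j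
      have : j = θ j := u.injective (h3.1.trans h2.1.symm)
      apply hj
      rw [← this] at h2
      exact h2
  have hiff : ∀ j, F j ↔ F (θ j) := fun j => ⟨hstep j, fun h2 => by
    by_contra h3; exact hstep' j h3 h2⟩
  set θF : Equiv.Perm (Fin n) := Equiv.Perm.ofSubtype (θ.subtypePerm (fun j => (hiff j).symm)) with hθF
  have hiff' : ∀ j, ¬ F j ↔ ¬ F (θ j) := fun j => not_iff_not.mpr (hiff j)
  set θG : Equiv.Perm (Fin n) := Equiv.Perm.ofSubtype (θ.subtypePerm (p := fun j => ¬ F j) (fun j => (hiff' j).symm)) with hθG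
  have hθFapp : ∀ j, F j → θF j = θ j := fun j hj =>
    Equiv.Perm.ofSubtype_apply_of_mem (θ.subtypePerm (fun j => (hiff j).symm)) hj
  have hθFapp' : ∀ j, ¬ F j → θF j = j := fun j hj =>
    Equiv.Perm.ofSubtype_apply_of_not_mem (θ.subtypePerm (fun j => (hiff j).symm)) hj
  have hθGapp : ∀ j, ¬ F j → θG j = θ j := fun j hj =>
    Equiv.Perm.ofSubtype_apply_of_mem (θ.subtypePerm (p := fun j => ¬ F j) (fun j => (hiff' j).symm)) hj
  have hθGapp' : ∀ j, F j → θG j = j := fun j hj =>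
    Equiv.Perm.ofSubtype_apply_of_not_mem (θ.subtypePerm (p := fun j => ¬ F j) (fun j => (hiff' j).symm)) (not_not_intro hj)
  have hdisj : θF.Disjoint θG := by
    intro j
    by_cases hj : F j
    · right; exact hθGapp' j hj
    · left; exact hθFapp' j hj
  have hdisj' : θF.Disjoint θG⁻¹ := by
    intro j
    by_cases hj : F j
    · right; rw [Equiv.Perm.inv_eq_iff_eq]; exact (hθGapp' j hj).symm
    · left; exact hθFapp' j hj
  have hsplit : θ = θF * θG := by
    ext j
    by_cases hj : F j
    · rw [Equiv.Perm.mul_apply, hθGapp' j hj, hθFapp j hj]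
    · rw [Equiv.Perm.mul_apply, hθGapp j hj, hθFapp' (θ j) ((hiff' j).mp hj)]
  have hw : v * u⁻¹ = θF * θG⁻¹ := by
    ext j
    by_cases hj : F j
    · have hu : u⁻¹ j = j := by rw [Equiv.Perm.inv_eq_iff_eq]; exact hj.1.symm
      have hg : θG⁻¹ j = j := by rw [Equiv.Perm.inv_eq_iff_eq]; exact (hθGapp' j hj).symm
      rw [Equiv.Perm.mul_apply, Equiv.Perm.mul_apply, hu, hj.2, hg, hθFapp j hj]
    · have h3 : u j = θ j ∧ v j = j := by
        rcases h j with h3 | h3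
        · exact absurd h3 hj
        · exact h3
      have hFi : ¬ F (θ⁻¹ j) := by
        intro h4
        exact hj (by simpa using (hiff (θ⁻¹ j)).mp h4)
      have h5 : u (θ⁻¹ j) = θ (θ⁻¹ j) ∧ v (θ⁻¹ j) = θ⁻¹ j := by
        rcases h (θ⁻¹ j) with h5 | h5
        · exact absurd h5 hFi
        · exact h5
      have hu : u⁻¹ j = θ⁻¹ j := by
        rw [Equiv.Perm.inv_eq_iff_eq, h5.1]; simp
      have hg : θG⁻¹ j = θ⁻¹ j := by
        rw [Equiv.Perm.inv_eq_iff_eq, hθGapp _ hFi]; simp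
      rw [Equiv.Perm.mul_apply, Equiv.Perm.mul_apply, hu, h5.2, hg, hθFapp' _ hFi]
  rw [Equiv.Perm.isConj_iff_cycleType_eq, hsplit, hw, Equiv.Perm.Disjoint.cycleType_mul hdisj, Equiv.Perm.Disjoint.cycleType_mul hdisj',
    Equiv.Perm.cycleType_inv]

lemma pair_eq {γ : Type*} [DecidableEq γ] {a b a' b' : γ}
    (e : ∀ j, (if a = j then (1:ℕ) else 0) + (if b = j then 1 else 0) =
      (if a' = j then 1 else 0) + (if b' = j then 1 else 0)) :
    (a' = a ∧ b' = b) ∨ (a' = b ∧ b' = a) := by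
  by_cases h1 : a' = a
  · refine Or.inl ⟨h1, ?_⟩
    by_cases hab : a = b
    · have ea := e a
      rw [if_pos rfl, if_pos hab.symm, if_pos h1] at ea
      by_cases h4 : b' = a
      · exact h4.trans hab
      · rw [if_neg h4] at ea; omega
    · have eb := e b
      rw [if_neg hab, if_pos rfl] at eb
      have h5 : ¬ a' = b := fun hh => hab (h1.symm.trans hh)
      rw [if_neg h5] at eb
      by_cases h6 : b' = b
      · exact h6
      · rw [if_neg h6] at eb; omega
  · have ha : b' = a := by
      have ea := e a
      rw [if_pos rfl, if_neg h1] at ea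
      by_cases h6 : b' = a
      · exact h6
      · rw [if_neg h6] at ea; split_ifs at ea <;> omega
    refine Or.inr ⟨?_, ha⟩
    have ea' := e a'
    rw [if_pos rfl] at ea'
    have h7 : ¬ a = a' := fun hh => h1 hh.symm
    rw [if_neg h7] at ea'
    by_cases h8 : b = a'
    · exact h8.symm
    · rw [if_neg h8] at ea'; split_ifs at ea' <;> omega

lemma decomp_unique {α β α' β' : Equiv.Perm (Fin n)}
    (h : Pm α + Pm β = Pm α' + Pm β') :
    IsConj (β * α⁻¹) (β' * α'⁻¹) := by
  have e : ∀ i j, (if α i = j then (1:ℕ) else 0) + (if β i = j then 1 else 0) =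
      (if α' i = j then 1 else 0) + (if β' i = j then 1 else 0) := by
    intro i j
    have := congrFun (congrFun h i) j
    simpa [Pm, Matrix.add_apply] using this
  have D : ∀ i, (α' i = α i ∧ β' i = β i) ∨ (α' i = β i ∧ β' i = α i) :=
    fun i => pair_eq (e i)
  have hk : ∀ j, ((α' * α⁻¹) j = j ∧ (β' * α⁻¹) j = (β * α⁻¹) j) ∨
      ((α' * α⁻¹) j = (β * α⁻¹) j ∧ (β' * α⁻¹) j = j) := by
    intro j
    rcases D (α⁻¹ j) with ⟨h1, h2⟩ | ⟨h1, h2⟩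
    · left
      constructor
      · simp only [Equiv.Perm.mul_apply, h1] <;> simp
      · simp only [Equiv.Perm.mul_apply, h2]
    · right
      constructor
      · simp only [Equiv.Perm.mul_apply, h1]
      · simp only [Equiv.Perm.mul_apply, h2] <;> simp
  have := key_perm hk
  have heq : (β' * α⁻¹) * (α' * α⁻¹)⁻¹ = β' * α'⁻¹ := by group
  rwa [heq] at this

/-- partition attached to a permutation of Fin n -/
def permPartition (σ : Equiv.Perm (Fin n)) : Nat.Partition n where
  parts := σ.cycleType + Multiset.replicate (n - σ.support.card) 1
  parts_pos := by
    intro k hk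
    rcases Multiset.mem_add.mp hk with hk | hk
    · exact lt_of_lt_of_le zero_lt_two (Equiv.Perm.two_le_of_mem_cycleType hk)
    · rw [Multiset.eq_of_mem_replicate hk]; exact zero_lt_one
  parts_sum := by
    rw [Multiset.sum_add, Equiv.Perm.sum_cycleType, Multiset.sum_replicate, smul_eq_mul,
      mul_one]
    have : σ.support.card ≤ n := by
      simpa using Finset.card_le_univ σ.support
    omega

lemma permPartition_eq_iff {σ τ : Equiv.Perm (Fin n)} :
    permPartition σ = permPartition τ ↔ IsConj σ τ := by
  constructor
  · intro h
    rw [Equiv.Perm.isConj_iff_cycleType_eq]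
    have h' := congrArg (fun P : Nat.Partition n => P.parts.filter (fun k => 2 ≤ k)) h
    simp only [permPartition, Multiset.filter_add] at h'
    rwa [Multiset.filter_eq_self.2 (fun _ h => Equiv.Perm.two_le_of_mem_cycleType h),
      Multiset.filter_eq_self.2 (fun _ h => Equiv.Perm.two_le_of_mem_cycleType h),
      Multiset.filter_eq_nil.2 (fun a h => by rw [Multiset.eq_of_mem_replicate h]; omega),
      Multiset.filter_eq_nil.2 (fun a h => by rw [Multiset.eq_of_mem_replicate h]; omega),
      add_zero, add_zero] at h'
  · intro h
    have hc := Equiv.Perm.isConj_iff_cycleType_eq.mp h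
    have hs : σ.support.card = τ.support.card := by
      rw [← Equiv.Perm.sum_cycleType, ← Equiv.Perm.sum_cycleType, hc]
    unfold permPartition
    ext1
    simp [hc, hs]

lemma permPartition_surj (P : Nat.Partition n) : ∃ σ : Equiv.Perm (Fin n), permPartition σ = P := by
  classical
  set m := P.parts.filter (fun k => 2 ≤ k) with hm
  set m' := P.parts.filter (fun k => ¬ 2 ≤ k) with hm'
  have hsplit : m + m' = P.parts := Multiset.filter_add_not _ _
  have hsum : m.sum + m'.sum = n := by
    rw [← Multiset.sum_add, hsplit, P.parts_sum]
  have hm'1 : ∀ a ∈ m', a = 1 := by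
    intro a ha
    have h1 := P.parts_pos (Multiset.mem_of_mem_filter ha)
    have h2 := (Multiset.mem_filter.mp ha).2
    omega
  have hm'rep : m' = Multiset.replicate (Multiset.card m') 1 :=
    Multiset.eq_replicate_card.mpr hm'1
  have hm'sum : m'.sum = Multiset.card m' := by
    conv_lhs => rw [hm'rep]
    simp
  obtain ⟨σ, hσ⟩ := (Equiv.Perm.exists_with_cycleType_iff (α := Fin n) (m := m)).mpr
    ⟨by rw [Fintype.card_fin]; omega, fun a ha => (Multiset.mem_filter.mp ha).2⟩
  refine ⟨σ, ?_⟩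
  have hsupp : σ.support.card = m.sum := by rw [← Equiv.Perm.sum_cycleType, hσ]
  ext1
  show σ.cycleType + Multiset.replicate (n - σ.support.card) 1 = P.parts
  rw [hσ, hsupp, show n - m.sum = Multiset.card m' by omega, ← hm'rep, hsplit]

noncomputable def inv (A : X n) : Nat.Partition n :=
  permPartition ((exists_decomp A).choose_spec.choose * (exists_decomp A).choose⁻¹)

lemma inv_eq {A : X n} {α β : Equiv.Perm (Fin n)} (h : A.1 = Pm α + Pm β) :
    inv A = permPartition (β * α⁻¹) := by
  apply permPartition_eq_iff.mpr
  have h2 := (exists_decomp A).choose_spec.choose_spec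
  exact decomp_unique (h2.symm.trans h)

lemma inv_smul (g : G n) (A : X n) : inv (g • A) = inv A := by
  obtain ⟨α, β, h⟩ := exists_decomp A
  rw [inv_eq h, inv_eq (smul_Pm g α β A h)]
  apply permPartition_eq_iff.mpr
  have : g.2 * β * g.1⁻¹ * (g.2 * α * g.1⁻¹)⁻¹ = g.2 * (β * α⁻¹) * g.2⁻¹ := by
    group
  rw [this]
  exact (isConj_iff.mpr ⟨g.2, rfl⟩).symm

lemma inv_eq_imp_orbit {A B : X n} (h : inv A = inv B) : ∃ g : G n, g • B = A := by
  obtain ⟨α, β, hA⟩ := exists_decomp A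
  obtain ⟨α', β', hB⟩ := exists_decomp B
  rw [inv_eq hA, inv_eq hB] at h
  obtain ⟨δ, hδ⟩ := isConj_iff.mp ((permPartition_eq_iff.mp h).symm)
  refine ⟨(α⁻¹ * δ * α', δ), ?_⟩
  apply Subtype.ext
  rw [smul_Pm _ α' β' B hB, hA]
  have h1 : δ * α' * (α⁻¹ * δ * α')⁻¹ = α := by group
  have h2 : δ * β' * (α⁻¹ * δ * α')⁻¹ = β := by
    have : δ * (β' * α'⁻¹) * δ⁻¹ = β * α⁻¹ := hδ
    calc δ * β' * (α⁻¹ * δ * α')⁻¹ = (δ * (β' * α'⁻¹) * δ⁻¹) * (δ * α' * (α⁻¹ * δ * α')⁻¹) := by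
          group
    _ = (β * α⁻¹) * α := by rw [this, h1]
    _ = β := by group
  rw [h1, h2]

/-- transpose map on X -/
def tr (A : X n) : X n := ⟨A.1ᵀ, A.2.2, A.2.1⟩

lemma Pm_transpose (α : Equiv.Perm (Fin n)) : (Pm α)ᵀ = Pm α⁻¹ := by
  funext i j
  show Pm α j i = Pm α⁻¹ i j
  simp only [Pm]
  congr 1
  apply propext
  constructor
  · intro h; rw [← h]; simp
  · intro h; rw [← h]; simp

lemma inv_tr (A : X n) : inv (tr A) = inv A := by
  obtain ⟨α, β, hA⟩ := exists_decomp A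
  have htr : (tr A).1 = Pm α⁻¹ + Pm β⁻¹ := by
    show A.1ᵀ = _
    rw [hA, Matrix.transpose_add, Pm_transpose, Pm_transpose]
  rw [inv_eq htr, inv_eq hA]
  apply permPartition_eq_iff.mpr
  have h2 : (β⁻¹ * α⁻¹⁻¹).cycleType = (α⁻¹ * β).cycleType := by
    rw [← Equiv.Perm.cycleType_inv]
    congr 1
  rw [Equiv.Perm.isConj_iff_cycleType_eq, h2]
  rw [← Equiv.Perm.isConj_iff_cycleType_eq]
  exact isConj_iff.mpr ⟨α, by group⟩

lemma tr_in_orbit (A : X n) : ∃ g : G n, g • tr A = A :=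
  inv_eq_imp_orbit (inv_tr A).symm

noncomputable instance : Fintype (X n) := Fintype.ofFinite _

noncomputable instance (p : X n → Prop) : Fintype {A : X n // p A} := Fintype.ofFinite _

noncomputable instance : Fintype (Quotient (orbitRel (G n) (X n))) := Fintype.ofFinite _

lemma swap_sum (P : G n → X n → Prop) :
    ∑ g : G n, Nat.card {A : X n // P g A} = ∑ A : X n, Nat.card {g : G n // P g A} := by
  classical
  have e : (Σ g : G n, {A : X n // P g A}) ≃ (Σ A : X n, {g : G n // P g A}) :=
    ⟨fun x => ⟨x.2.1, x.1, x.2.2⟩, fun x => ⟨x.2.1, x.1, x.2.2⟩,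
      fun ⟨g, A, h⟩ => rfl, fun ⟨A, g, h⟩ => rfl⟩
  calc ∑ g : G n, Nat.card {A : X n // P g A}
      = ∑ g : G n, Fintype.card {A : X n // P g A} := by
        simp [Nat.card_eq_fintype_card]
    _ = Fintype.card (Σ g : G n, {A : X n // P g A}) := Fintype.card_sigma.symm
    _ = Fintype.card (Σ A : X n, {g : G n // P g A}) := Fintype.card_congr e
    _ = ∑ A : X n, Fintype.card {g : G n // P g A} := Fintype.card_sigma
    _ = ∑ A : X n, Nat.card {g : G n // P g A} := by
        simp [Nat.card_eq_fintype_card]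

lemma stab_twist (A : X n) :
    Nat.card {g : G n // g • tr A = A} = Nat.card {g : G n // g • A = A} := by
  obtain ⟨g₀, hg₀⟩ := tr_in_orbit A
  have hA : g₀⁻¹ • A = tr A := inv_smul_eq_iff.mpr hg₀.symm
  apply Nat.card_congr
  refine ⟨fun x => ⟨x.1 * g₀⁻¹, ?_⟩, fun x => ⟨x.1 * g₀, ?_⟩, ?_, ?_⟩
  · rw [mul_smul, hA, x.2]
  · rw [mul_smul, hg₀, x.2]
  · intro x; apply Subtype.ext; simp
  · intro x; apply Subtype.ext; simp

lemma tr_smul (g : G n) (B : X n) : tr (g • B) = ((g.2, g.1) : G n) • tr B := by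
  apply Subtype.ext
  funext i j
  rfl

lemma twist_shift (σ τ : Equiv.Perm (Fin n)) (A : X n) :
    (((σ, τ) : G n) • tr A = A) ↔
      ((((σ * τ, 1) : G n)) • tr ((((1, τ⁻¹) : G n)) • A) = ((1, τ⁻¹) : G n) • A) := by
  rw [tr_smul ((1, τ⁻¹) : G n) A, ← mul_smul]
  have h1 : ((σ * τ, 1) : G n) * ((τ⁻¹, 1) : G n) = ((σ, 1) : G n) := by
    simp [Prod.ext_iff, mul_assoc]
  rw [h1]
  constructor
  · intro h
    have h2 := congrArg (fun B : X n => ((1, τ⁻¹) : G n) • B) h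
    rw [← mul_smul] at h2
    have h3 : ((1, τ⁻¹) : G n) * ((σ, τ) : G n) = ((σ, 1) : G n) := by
      simp [Prod.ext_iff]
    rwa [h3] at h2
  · intro h
    have h2 := congrArg (fun B : X n => ((1, τ) : G n) • B) h
    rw [← mul_smul, ← mul_smul] at h2
    have h3 : ((1, τ) : G n) * ((σ, 1) : G n) = ((σ, τ) : G n) := by
      simp [Prod.ext_iff]
    have h4 : ((1, τ) : G n) * ((1, τ⁻¹) : G n) = (1 : G n) := by
      simp [Prod.ext_iff]
    rwa [h3, h4, one_smul] at h2

noncomputable def Φ : Quotient (orbitRel (G n) (X n)) → Nat.Partition n :=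
  Quotient.lift inv (by
    intro a b hab
    obtain ⟨g, hg⟩ := MulAction.mem_orbit_iff.mp hab
    rw [← hg, inv_smul])

lemma Φ_bij : Function.Bijective (Φ (n := n)) := by
  constructor
  · intro x y
    induction x using Quotient.ind
    induction y using Quotient.ind
    intro h
    exact Quotient.sound (MulAction.mem_orbit_iff.mpr (inv_eq_imp_orbit h))
  · intro P
    obtain ⟨σ, hσ⟩ := permPartition_surj P
    refine ⟨⟦⟨Pm 1 + Pm σ, RC_PmPm 1 σ⟩⟧, ?_⟩
    show inv _ = P
    rw [inv_eq (A := ⟨Pm 1 + Pm σ, RC_PmPm 1 σ⟩) rfl]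
    simpa using hσ

theorem main_count :
    ∑ σ : Equiv.Perm (Fin n),
      Nat.card {A : X n // ((σ, (1 : Equiv.Perm (Fin n))) : G n) • tr A = A} =
    n.factorial * Nat.card (Nat.Partition n) := by
  classical
  have step1 : ∑ g : G n, Nat.card {A : X n // g • tr A = A} =
      n.factorial * ∑ σ : Equiv.Perm (Fin n),
        Nat.card {A : X n // ((σ, (1 : Equiv.Perm (Fin n))) : G n) • tr A = A} := by
    rw [Fintype.sum_prod_type]
    have hinner : ∀ σ : Equiv.Perm (Fin n),
        ∑ τ : Equiv.Perm (Fin n), Nat.card {A : X n // ((σ, τ) : G n) • tr A = A} =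
        ∑ ρ : Equiv.Perm (Fin n), Nat.card {A : X n // ((ρ, 1) : G n) • tr A = A} := by
      intro σ
      have h1 : ∀ τ : Equiv.Perm (Fin n),
          Nat.card {A : X n // ((σ, τ) : G n) • tr A = A} =
          Nat.card {A : X n // ((σ * τ, 1) : G n) • tr A = A} := by
        intro τ
        exact Nat.card_congr (Equiv.subtypeEquiv (MulAction.toPerm ((1, τ⁻¹) : G n))
          (fun A => twist_shift σ τ A))
      calc ∑ τ : Equiv.Perm (Fin n), Nat.card {A : X n // ((σ, τ) : G n) • tr A = A}
          = ∑ τ : Equiv.Perm (Fin n), Nat.card {A : X n // ((σ * τ, 1) : G n) • tr A = A} :=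
            Finset.sum_congr rfl (fun τ _ => h1 τ)
        _ = ∑ ρ : Equiv.Perm (Fin n), Nat.card {A : X n // ((ρ, 1) : G n) • tr A = A} := by
            rw [← Equiv.sum_comp (Equiv.mulLeft σ)
              (fun ρ => Nat.card {A : X n // ((ρ, 1) : G n) • tr A = A})]
            rfl
    rw [Finset.sum_congr rfl (fun σ _ => hinner σ)]
    rw [Finset.sum_const]
    simp [Fintype.card_perm, Fintype.card_fin, mul_comm]
  have step2 : ∑ g : G n, Nat.card {A : X n // g • tr A = A} =
      ∑ g : G n, Nat.card {A : X n // g • A = A} := by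
    rw [swap_sum, swap_sum]
    exact Finset.sum_congr rfl (fun A _ => stab_twist A)
  have step3 : ∑ g : G n, Nat.card {A : X n // g • A = A} =
      Nat.card (Nat.Partition n) * (n.factorial * n.factorial) := by
    have hb := MulAction.sum_card_fixedBy_eq_card_orbits_mul_card_group (G n) (X n)
    have hfix : ∀ g : G n, Nat.card {A : X n // g • A = A} =
        Fintype.card (MulAction.fixedBy (X n) g) := by
      intro g
      rw [← Nat.card_eq_fintype_card]
      exact Nat.card_congr (Equiv.subtypeEquivRight (fun A => (MulAction.mem_fixedBy).symm))
    rw [Finset.sum_congr rfl (fun g _ => hfix g), hb]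
    have horb : Fintype.card (Quotient (orbitRel (G n) (X n))) = Nat.card (Nat.Partition n) := by
      rw [← Nat.card_eq_fintype_card]
      exact Nat.card_congr (Equiv.ofBijective _ Φ_bij)
    have hG : Fintype.card (G n) = n.factorial * n.factorial := by
      simp [Fintype.card_prod, Fintype.card_perm, Fintype.card_fin]
    rw [horb, hG]
  have := step1.symm.trans (step2.trans step3)
  have hpos : 0 < n.factorial := n.factorial_pos
  nlinarith [this]

end Stmt18

open Matrix

/-- `(1/n!) Σ_{σ ∈ S_n} #{A ∈ M(n,2) | σ·Aᵀ = A}` equals the number of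
partitions of `n`. -/
theorem stmt18 (n : ℕ) (hn : 0 < n) :
    (n.factorial : ℚ)⁻¹ *
        ∑ σ : Equiv.Perm (Fin n),
          (Nat.card {A : Matrix (Fin n) (Fin n) ℕ //
            ((∀ i, ∑ j, A i j = 2) ∧ (∀ j, ∑ i, A i j = 2)) ∧
              ∀ i j, Aᵀ (σ⁻¹ i) j = A i j} : ℚ) =
      (Nat.card (Nat.Partition n) : ℚ) := by
  classical
  have hcard : ∀ σ : Equiv.Perm (Fin n),
      Nat.card {A : Matrix (Fin n) (Fin n) ℕ //
        ((∀ i, ∑ j, A i j = 2) ∧ (∀ j, ∑ i, A i j = 2)) ∧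
          ∀ i j, Aᵀ (σ⁻¹ i) j = A i j} =
      Nat.card {A : Stmt18.X n // ((σ, (1 : Equiv.Perm (Fin n))) : Stmt18.G n) • Stmt18.tr A = A} := by
    intro σ
    apply Nat.card_congr
    refine ⟨fun x => ⟨⟨x.1, x.2.1⟩, ?_⟩, fun y => ⟨y.1.1, y.1.2, fun i j => ?_⟩, ?_, ?_⟩
    · apply Subtype.ext
      funext i j
      show x.1ᵀ (σ⁻¹ i) ((1 : Equiv.Perm (Fin n))⁻¹ j) = x.1 i j
      simpa using x.2.2 i j
    · have := congrArg (fun B : Stmt18.X n => B.1 i j) y.2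
      exact this
    · intro x; rfl
    · intro y; apply Subtype.ext; apply Subtype.ext; rfl
  have hsum : ∑ σ : Equiv.Perm (Fin n),
      (Nat.card {A : Matrix (Fin n) (Fin n) ℕ //
        ((∀ i, ∑ j, A i j = 2) ∧ (∀ j, ∑ i, A i j = 2)) ∧
          ∀ i j, Aᵀ (σ⁻¹ i) j = A i j} : ℚ) =
      ((n.factorial * Nat.card (Nat.Partition n) : ℕ) : ℚ) := by
    rw [← Stmt18.main_count]
    rw [Nat.cast_sum]
    exact Finset.sum_congr rfl (fun σ _ => by rw [hcard σ])
  rw [hsum]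
  have hne : (n.factorial : ℚ) ≠ 0 := Nat.cast_ne_zero.mpr n.factorial_ne_zero
  push_cast
  rw [← mul_assoc, inv_mul_cancel₀ hne, one_mul]
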